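/- Suppose a semigroup P(t) of positive linear operators on bounded Borel functions on a Hilbert space X satisfies, for some t₀ > 0 and constant c > 0, the log-Harnack inequality P(t₀)(ln f)(x + h) ≤ ln(P(t₀)f(x)) + c‖h‖_C² for all bounded Borel f with inf f > 0 and all h in a dense linear subspace H₀ of H_C, where each P(t₀)f is continuous on X. Then for every bounded Borel f ≥ 0 and x ∈ X, lim_{h → 0 in H₀, ‖h‖_C → 0} P(t₀)f(x + h) = P(t₀)f(x). -/
import Mathlib

private lemma log_lower_aux {r : ℝ} (hr : 0 ≤ r) : r - r ^ 2 ≤ Real.log (1 + r) := by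
  have h1 : (0:ℝ) < 1 + r := by linarith
  have h2 := Real.one_sub_inv_le_log_of_pos h1
  have h3 : r - r ^ 2 ≤ 1 - (1 + r)⁻¹ := by
    have e : (1 + r) * (1 + r)⁻¹ = 1 := mul_inv_cancel₀ h1.ne'
    have hi : 0 ≤ (1 + r)⁻¹ := inv_nonneg.mpr h1.le
    nlinarith [pow_nonneg hr 3]
  linarith

/-- Strong Feller-type property derived from a log-Harnack inequality.  `P` is the
(positive, linear, Markovian) operator `P(t₀)` acting on functions on `X`; `HC` is the
Hilbert space `H_C` embedded in `X` through `ι`; `H₀` is a dense linear subspace of `HC`.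
If the log-Harnack inequality holds along `H₀` and `P f` is continuous for every bounded
Borel `f`, then `P f (x + h) → P f x` as `h → 0` in `H₀` (w.r.t. `‖·‖_C`) for every
bounded Borel `f ≥ 0`. -/
theorem stmt_17 {X HC : Type*}
    [NormedAddCommGroup X] [InnerProductSpace ℝ X] [CompleteSpace X] [MeasurableSpace X] [BorelSpace X]
    [NormedAddCommGroup HC] [InnerProductSpace ℝ HC] [CompleteSpace HC]
    (ι : HC →ₗ[ℝ] X) (hι : Function.Injective ι)
    (H₀ : Submodule ℝ HC) (hdense : Dense (H₀ : Set HC))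
    (P : (X → ℝ) →ₗ[ℝ] (X → ℝ))
    (hmono : ∀ f g : X → ℝ, (∀ x, f x ≤ g x) → ∀ x, P f x ≤ P g x)
    (hone : P (fun _ => 1) = fun _ => 1)
    (hcont : ∀ f : X → ℝ, Measurable f → (∃ B, ∀ x, |f x| ≤ B) → Continuous (P f))
    (c : ℝ) (hc : 0 < c)
    (hLogHarnack : ∀ f : X → ℝ, Measurable f → (∃ B, ∀ x, |f x| ≤ B) →
      (∃ ε > 0, ∀ x, ε ≤ f x) → ∀ x : X, ∀ h ∈ H₀,
        P (fun z => Real.log (f z)) (x + ι h) ≤ Real.log (P f x) + c * ‖h‖ ^ 2) :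
    ∀ f : X → ℝ, Measurable f → (∃ B, ∀ x, |f x| ≤ B) → (∀ x, 0 ≤ f x) →
      ∀ x : X, ∀ ε > 0, ∃ δ > 0, ∀ h ∈ H₀, ‖h‖ < δ →
        |P f (x + ι h) - P f x| < ε := by
  intro f hfm hfb hf0 x ε hε
  obtain ⟨B, hB⟩ := hfb
  have hB0 : 0 ≤ B := le_trans (abs_nonneg _) (hB 0)
  have hfB : ∀ z, f z ≤ B := fun z => le_trans (le_abs_self _) (hB z)
  have hPf0 : ∀ y, 0 ≤ P f y := by
    intro y
    have h0 : P (0 : X → ℝ) = 0 := map_zero P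
    have := hmono 0 f hf0 y
    simpa [h0] using this
  set η := ε / (2 * (B ^ 2 + 1)) with hηdef
  have hη : 0 < η := by positivity
  -- the auxiliary function g = 1 + η f
  set g : X → ℝ := fun z => 1 + η * f z with hg
  have hgm : Measurable g := measurable_const.add (hfm.const_mul η)
  have hgb : ∃ B', ∀ z, |g z| ≤ B' := by
    refine ⟨1 + η * B, fun z => ?_⟩
    have h1 : 0 ≤ η * f z := mul_nonneg hη.le (hf0 z)
    have h2 : η * f z ≤ η * B := mul_le_mul_of_nonneg_left (hfB z) hη.le
    simp only [hg]
    rw [abs_of_nonneg (by linarith)]; linarith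
  have hginf : ∃ ε' > 0, ∀ z, ε' ≤ g z := by
    refine ⟨1, one_pos, fun z => ?_⟩
    have : 0 ≤ η * f z := mul_nonneg hη.le (hf0 z)
    simp only [hg]; linarith
  -- P g = 1 + η P f
  have hPg : ∀ y, P g y = 1 + η * P f y := by
    intro y
    have hgeq : g = (fun _ => (1:ℝ)) + η • f := by
      funext z; simp [hg, smul_eq_mul]
    rw [hgeq, map_add, map_smul, hone]
    simp [smul_eq_mul]
  -- key one-sided estimate
  have key : ∀ y : X, ∀ h ∈ H₀, η * P f (y + ι h) ≤ η * P f y + η ^ 2 * B ^ 2 + c * ‖h‖ ^ 2 := by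
    intro y h hh
    -- lower bound for P (log ∘ g)
    have hlow : ∀ z, η * f z - η ^ 2 * B ^ 2 ≤ Real.log (g z) := by
      intro z
      have hr : 0 ≤ η * f z := mul_nonneg hη.le (hf0 z)
      have h1 := log_lower_aux hr
      have h2 : (η * f z) ^ 2 ≤ η ^ 2 * B ^ 2 := by
        have hsq : f z ^ 2 ≤ B ^ 2 := by nlinarith [hfB z, hf0 z]
        calc (η * f z) ^ 2 = η ^ 2 * f z ^ 2 := by ring
          _ ≤ η ^ 2 * B ^ 2 := mul_le_mul_of_nonneg_left hsq (sq_nonneg η)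
      calc η * f z - η ^ 2 * B ^ 2 ≤ η * f z - (η * f z) ^ 2 := by linarith
        _ ≤ Real.log (1 + η * f z) := h1
        _ = Real.log (g z) := rfl
    have hφ : P (fun z => η * f z - η ^ 2 * B ^ 2) (y + ι h)
        = η * P f (y + ι h) - η ^ 2 * B ^ 2 := by
      have heq : (fun z => η * f z - η ^ 2 * B ^ 2)
          = η • f - (η ^ 2 * B ^ 2) • (fun _ => (1:ℝ)) := by
        funext z; simp [smul_eq_mul]
      rw [heq, map_sub, map_smul, map_smul, hone]
      simp [smul_eq_mul]
    have hPlow : η * P f (y + ι h) - η ^ 2 * B ^ 2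
        ≤ P (fun z => Real.log (g z)) (y + ι h) := by
      rw [← hφ]
      exact hmono _ _ hlow _
    have hLH := hLogHarnack g hgm hgb hginf y h hh
    have hPgpos : 0 < P g y := by
      rw [hPg y]
      have := hPf0 y
      nlinarith
    have hlog : Real.log (P g y) ≤ η * P f y := by
      have h5 := Real.log_le_sub_one_of_pos hPgpos
      rw [hPg y]
      rw [hPg y] at h5
      linarith
    linarith
  -- choose δ
  refine ⟨Real.sqrt (η * ε / (2 * c)), Real.sqrt_pos.mpr (by positivity), fun h hh hhδ => ?_⟩
  have hnn : 0 ≤ ‖h‖ := norm_nonneg h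
  have hsq : ‖h‖ ^ 2 < η * ε / (2 * c) := by
    have := Real.sq_sqrt (show 0 ≤ η * ε / (2 * c) by positivity)
    nlinarith [Real.sqrt_nonneg (η * ε / (2 * c))]
  have hc2 : c * ‖h‖ ^ 2 < η * ε / 2 := by
    rw [lt_div_iff₀ (by positivity : (0:ℝ) < 2 * c)] at hsq
    nlinarith
  have hηB : η ^ 2 * B ^ 2 < η * ε / 2 := by
    have : η * B ^ 2 < ε / 2 := by
      rw [hηdef]
      rw [div_mul_eq_mul_div, div_lt_div_iff₀ (by positivity) (by norm_num)]
      nlinarith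
    nlinarith
  have k1 := key x h hh
  have k2 := key (x + ι h) (-h) (neg_mem hh)
  rw [map_neg, add_neg_cancel_right, norm_neg] at k2
  rw [abs_lt]
  constructor
  · have : η * (P f x - P f (x + ι h)) < η * ε := by nlinarith
    nlinarith
  · have : η * (P f (x + ι h) - P f x) < η * ε := by nlinarith
    nlinarith
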